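/- The function f(x) = ∫₀ˣ |cos(1/t)|^(1/|t|) dt (with integrand 0 at t = 0) is differentiable at 0 with f'(0) = 0, and its derivative f'(x) = |cos(1/x)|^(1/|x|) ≥ 0 for x ≠ 0 is not continuous at 0. -/

import Mathlib

open Real MeasureTheory Set Filter Topology intervalIntegral

noncomputable def G (t : ℝ) : ℝ := if t = 0 then 0 else |Real.cos (1 / t)| ^ (1 / |t|)

lemma G_nonneg (t : ℝ) : 0 ≤ G t := by
  unfold G; split
  exacts [le_refl 0, Real.rpow_nonneg (abs_nonneg _) _]

lemma G_le_one (t : ℝ) : G t ≤ 1 := by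
  unfold G; split
  exacts [zero_le_one, Real.rpow_le_one (abs_nonneg _) (abs_cos_le_one _) (by positivity)]

lemma G_meas : Measurable G := by
  have hG : G = fun t => if t = 0 then 0 else
      if Real.cos (1/t) = 0 then 0 else Real.exp (Real.log |Real.cos (1/t)| * (1/|t|)) := by
    funext t
    unfold G
    rcases eq_or_ne t 0 with h | h
    · simp [h]
    · rw [if_neg h, if_neg h]
      rcases eq_or_ne (Real.cos (1/t)) 0 with hc | hc
      · rw [if_pos hc, hc, abs_zero, Real.zero_rpow (by positivity)]
      · rw [if_neg hc, Real.rpow_def_of_pos (abs_pos.2 hc)]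
  rw [hG]
  have h1 : Measurable fun t : ℝ => Real.cos (1/t) :=
    Real.measurable_cos.comp (measurable_const.div measurable_id)
  exact Measurable.ite (measurableSet_eq)
    measurable_const <| Measurable.ite (h1 (measurableSet_singleton 0))
    measurable_const ((h1.abs.log.mul (measurable_const.div measurable_id.abs)).exp)

lemma G_intble (a b : ℝ) : IntervalIntegrable G volume a b := by
  apply IntervalIntegrable.mono_fun' (g := fun _ => (1:ℝ))
    intervalIntegrable_const G_meas.aestronglyMeasurable
  filter_upwards with t
  rw [Real.norm_eq_abs, abs_of_nonneg (G_nonneg t)]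
  exact G_le_one t

lemma G_even (t : ℝ) : G (-t) = G t := by
  unfold G
  rcases eq_or_ne t 0 with h | h
  · simp [h]
  · rw [if_neg (neg_ne_zero.2 h), if_neg h, abs_neg]; simp [one_div, inv_neg]

lemma cos_bound (w u : ℝ) (hw0 : 0 < w) (hw : w < π/2) (hu : 0 ≤ u)
    (h : ∀ k : ℕ, u ∉ Ioo ((k:ℝ)*π - w) ((k:ℝ)*π + w)) : |Real.cos u| ≤ Real.cos w := by
  have hπ : (0:ℝ) < π := Real.pi_pos
  set k : ℕ := ⌊u/π⌋₊ with hk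
  have hk1 : (k:ℝ)*π ≤ u := by
    rw [← le_div_iff₀ hπ]
    exact Nat.floor_le (div_nonneg hu hπ.le)
  have hk2 : u < ((k:ℝ)+1)*π := by
    rw [← div_lt_iff₀ hπ]
    exact Nat.lt_floor_add_one _
  set r := u - (k:ℝ)*π with hr
  have hr0 : 0 ≤ r := by simp [hr]; linarith
  have hrπ : r < π := by simp [hr]; nlinarith
  have hcos : |Real.cos u| = |Real.cos r| := by
    have : u = (k:ℝ)*π - (-r) := by ring
    rw [this, Real.cos_nat_mul_pi_sub, Real.cos_neg, abs_mul, abs_pow, abs_neg, abs_one,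
      one_pow, one_mul]
  rcases le_or_gt r (π/2) with hhalf | hhalf
  · have hwr : w ≤ r := by
      have := h k
      rw [mem_Ioo, not_and_or, not_lt, not_lt] at this
      rcases this with h1 | h1
      · linarith
      · linarith
    rw [hcos, abs_of_nonneg (Real.cos_nonneg_of_mem_Icc ⟨by linarith, hhalf⟩)]
    exact Real.cos_le_cos_of_nonneg_of_le_pi hw0.le (by linarith) hwr
  · have hwr : w ≤ π - r := by
      have := h (k+1)
      rw [mem_Ioo, not_and_or, not_lt, not_lt] at this
      push_cast at this
      rcases this with h1 | h1
      · linarith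
      · linarith
    have hcc : Real.cos (π - r) = -Real.cos r := Real.cos_pi_sub r
    have hnn : 0 ≤ Real.cos (π - r) :=
      Real.cos_nonneg_of_mem_Icc ⟨by linarith, by linarith⟩
    rw [hcos, abs_of_nonpos (by linarith), ← hcc]
    exact Real.cos_le_cos_of_nonneg_of_le_pi hw0.le (by linarith) hwr

lemma est (w x : ℝ) (hw0 : 0 < w) (hw : w < π/2) (hx0 : 0 < x)
    (hx1 : x < 1/(2*π)) (hx2 : x ≤ 1/(4*w)) :
    ∫ t in (0:ℝ)..x, G t ≤ (8*w/π)*x + Real.cos w ^ (1/x) * x := by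
  have hπ : (0:ℝ) < π := Real.pi_pos
  have hcw : 0 < Real.cos w := Real.cos_pos_of_mem_Ioo ⟨by linarith, hw⟩
  have hcw1 : Real.cos w ≤ 1 := Real.cos_le_one w
  have hxinv : 2*π < 1/x := by
    rw [lt_div_iff₀ hx0]
    calc 2*π*x < 2*π*(1/(2*π)) := by
          apply mul_lt_mul_of_pos_left hx1 (by positivity)
      _ = 1 := by field_simp
  have hwx : 2*w ≤ 1/(2*x) := by
    have : 4*w*x ≤ 1 := by
      calc 4*w*x ≤ 4*w*(1/(4*w)) := by
            apply mul_le_mul_of_nonneg_left hx2 (by positivity)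
        _ = 1 := by field_simp
    rw [le_div_iff₀ (by positivity)]
    linarith
  set N : ℕ := ⌊(1/x - w)/π⌋₊ with hN
  have hN1 : (N:ℝ)*π + w ≤ 1/x := by
    have h1 : (N:ℝ) ≤ (1/x - w)/π := Nat.floor_le (div_nonneg (by linarith) hπ.le)
    have h2 : (N:ℝ)*π ≤ 1/x - w := (le_div_iff₀ hπ).mp h1
    linarith
  have hN2 : 1/x - w < ((N:ℝ)+1)*π := by
    have := Nat.lt_floor_add_one ((1/x - w)/π)
    rw [div_lt_iff₀ hπ] at this
    linarith
  set m : ℕ → ℝ := fun j => ((N:ℝ)+1+(j:ℝ))*π with hm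
  have hmπ : ∀ j : ℕ, π ≤ m j := by
    intro j
    rw [hm]; simp only
    nlinarith [Nat.cast_nonneg (α := ℝ) N, Nat.cast_nonneg (α := ℝ) j]
  have hmw : ∀ j : ℕ, w < m j := fun j => by linarith [hmπ j]
  set S : Set ℝ := ⋃ j : ℕ, Ioo (1/(m j + w)) (1/(m j - w)) with hS
  have hSmeas : MeasurableSet S := MeasurableSet.iUnion fun j => measurableSet_Ioo
  -- measure bound
  have hμS : volume S ≤ ENNReal.ofReal ((8*w/π) * x) := by
    refine le_trans (measure_iUnion_le _) ?_
    have hterm : ∀ j : ℕ, volume (Ioo (1/(m j + w)) (1/(m j - w)))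
        = ENNReal.ofReal (1/(m j - w) - 1/(m j + w)) := fun j => Real.volume_Ioo
    calc ∑' j : ℕ, volume (Ioo (1/(m j + w)) (1/(m j - w)))
        ≤ ENNReal.ofReal ((4*w/π) * (1/(m 0 - w))) := by
          apply ENNReal.tsum_le_of_sum_range_le
          intro n
          rw [Finset.sum_congr rfl (fun j _ => hterm j), ← ENNReal.ofReal_sum_of_nonneg]
          · apply ENNReal.ofReal_le_ofReal
            have key : ∀ j : ℕ, 1/(m j - w) - 1/(m j + w)
                ≤ (4*w/π) * (1/(m j - w) - 1/(m (j+1) - w)) := by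
              intro j
              have h1 : w < m j := hmw j
              have h2 : m (j+1) = m j + π := by rw [hm]; push_cast; ring
              have hπm : π ≤ m j := hmπ j
              rw [h2]
              have e1 : 0 < m j - w := by linarith
              have e2 : 0 < m j + w := by linarith
              have e3 : 0 < m j + π - w := by linarith
              have eL : 1/(m j - w) - 1/(m j + w) = (2*w)/((m j - w)*(m j + w)) := by
                field_simp <;> ring
              have eR : (4*w/π) * (1/(m j - w) - 1/(m j + π - w))
                  = (4*w)/((m j - w)*(m j + π - w)) := by
                field_simp <;> ring
              rw [eL, eR, div_le_div_iff₀ (by positivity) (by positivity)]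
              nlinarith [mul_nonneg (mul_nonneg (by linarith : (0:ℝ) ≤ 2*w) e1.le)
                (by linarith : (0:ℝ) ≤ m j + 3*w - π)]
            calc ∑ j ∈ Finset.range n, (1/(m j - w) - 1/(m j + w))
                ≤ ∑ j ∈ Finset.range n, (4*w/π) * (1/(m j - w) - 1/(m (j+1) - w)) :=
                  Finset.sum_le_sum fun j _ => key j
              _ = (4*w/π) * (1/(m 0 - w) - 1/(m n - w)) := by
                  rw [← Finset.mul_sum, Finset.sum_range_sub' (fun j => 1/(m j - w))]
              _ ≤ (4*w/π) * (1/(m 0 - w)) := by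
                  have : 0 ≤ 1/(m n - w) := div_nonneg one_pos.le (by linarith [hmw n])
                  have h0 : (0:ℝ) ≤ 4*w/π := by positivity
                  nlinarith
          · intro j _
            have := hmw j
            have : 1/(m j + w) ≤ 1/(m j - w) :=
              one_div_le_one_div_of_le (by linarith) (by linarith)
            linarith
      _ ≤ ENNReal.ofReal ((8*w/π) * x) := by
          apply ENNReal.ofReal_le_ofReal
          have hm0 : 1/(2*x) ≤ m 0 - w := by
            have hmeq : m 0 = ((N:ℝ)+1)*π := by rw [hm]; push_cast; ring
            have hhalf : 1/(2*x) * 2 = 1/x := by field_simp <;> ring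
            rw [hmeq]
            linarith
          have h2x : (0:ℝ) < 1/(2*x) := by positivity
          have : 1/(m 0 - w) ≤ 2*x := by
            have h := one_div_le_one_div_of_le h2x hm0
            rwa [one_div_one_div] at h
          calc (4*w/π) * (1/(m 0 - w)) ≤ (4*w/π) * (2*x) := by
                apply mul_le_mul_of_nonneg_left this (by positivity)
            _ = (8*w/π) * x := by ring
  -- pointwise bound off S
  have hpt : ∀ t ∈ Ioc (0:ℝ) x \ S, G t ≤ Real.cos w ^ (1/x) := by
    rintro t ⟨⟨ht0, htx⟩, htS⟩
    have htinv : 1/x ≤ 1/t := one_div_le_one_div_of_le ht0 htx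
    have hcos : |Real.cos (1/t)| ≤ Real.cos w := by
      apply cos_bound w (1/t) hw0 hw (by positivity)
      intro k hk
      rcases le_or_gt (k : ℕ) N with hkN | hkN
      · have : (k:ℝ)*π + w ≤ 1/x := by
          have : (k:ℝ) ≤ (N:ℝ) := Nat.cast_le.mpr hkN
          nlinarith
        exact absurd hk.2 (by linarith [htinv])
      · have hj : ∃ j : ℕ, k = N + 1 + j := ⟨k - (N+1), by omega⟩
        obtain ⟨j, rfl⟩ := hj
        have hmj : m j = ((N:ℝ)+1+(j:ℝ))*π := rfl
        have hcast : ((N+1+j : ℕ):ℝ)*π = m j := by push_cast [hmj]; ring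
        rw [hcast] at hk
        apply htS
        rw [hS, mem_iUnion]
        have hjw : (0:ℝ) < m j - w := by linarith [hmw j]
        refine ⟨j, ?_, ?_⟩
        · rw [div_lt_iff₀ (by linarith [hmw j, hw0] : (0:ℝ) < m j + w)]
          have h := (div_lt_iff₀ ht0).mp hk.2
          linarith [mul_comm t (m j + w)]
        · rw [lt_div_iff₀ hjw]
          have h := (lt_div_iff₀ ht0).mp hk.1
          linarith [mul_comm t (m j - w)]
    have hGt : G t = |Real.cos (1/t)| ^ (1/t) := by
      unfold G; rw [if_neg (ne_of_gt ht0), abs_of_pos ht0]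
    calc G t ≤ Real.cos w ^ (1/t) := by
          rw [hGt]; exact Real.rpow_le_rpow (abs_nonneg _) hcos (by positivity)
      _ ≤ Real.cos w ^ (1/x) := Real.rpow_le_rpow_of_exponent_ge hcw hcw1 htinv
  -- assemble
  rw [integral_of_le hx0.le]
  have hIoc : IntegrableOn G (Ioc 0 x) volume := (G_intble 0 x).1
  have hdisj : Disjoint (Ioc (0:ℝ) x ∩ S) (Ioc (0:ℝ) x \ S) :=
    Disjoint.mono_left inter_subset_right disjoint_sdiff_right
  have hmeas2 : MeasurableSet (Ioc (0:ℝ) x \ S) := measurableSet_Ioc.diff hSmeas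
  have hi1 : IntegrableOn G (Ioc (0:ℝ) x ∩ S) volume := hIoc.mono_set inter_subset_left
  have hi2 : IntegrableOn G (Ioc (0:ℝ) x \ S) volume := hIoc.mono_set diff_subset
  have hsplit : ∫ t in Ioc (0:ℝ) x, G t
      = (∫ t in Ioc (0:ℝ) x ∩ S, G t) + ∫ t in Ioc (0:ℝ) x \ S, G t := by
    rw [← setIntegral_union hdisj hmeas2 hi1 hi2, Set.inter_union_diff]
  have hb1 : ∫ t in Ioc (0:ℝ) x ∩ S, G t ≤ (8*w/π)*x := by
    have hfin : volume (Ioc (0:ℝ) x ∩ S) < ⊤ :=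
      lt_of_le_of_lt (measure_mono inter_subset_left)
        (by rw [Real.volume_Ioc]; exact ENNReal.ofReal_lt_top)
    have hn := norm_setIntegral_le_of_norm_le_const (C := 1) hfin
      (fun t _ => by rw [Real.norm_eq_abs, abs_of_nonneg (G_nonneg t)]; exact G_le_one t)
    have hμ : (volume (Ioc (0:ℝ) x ∩ S)).toReal ≤ (8*w/π)*x := by
      apply ENNReal.toReal_le_of_le_ofReal (by positivity)
      exact le_trans (measure_mono inter_subset_right) hμS
    calc ∫ t in Ioc (0:ℝ) x ∩ S, G t ≤ ‖∫ t in Ioc (0:ℝ) x ∩ S, G t‖ := le_abs_self _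
      _ ≤ 1 * (volume (Ioc (0:ℝ) x ∩ S)).toReal := hn
      _ ≤ (8*w/π)*x := by rw [one_mul]; exact hμ
  have hb2 : ∫ t in Ioc (0:ℝ) x \ S, G t ≤ Real.cos w ^ (1/x) * x := by
    have hfin : volume (Ioc (0:ℝ) x \ S) < ⊤ :=
      lt_of_le_of_lt (measure_mono diff_subset)
        (by rw [Real.volume_Ioc]; exact ENNReal.ofReal_lt_top)
    have hn := norm_setIntegral_le_of_norm_le_const (C := Real.cos w ^ (1/x)) hfin
      (fun t ht => by
        rw [Real.norm_eq_abs, abs_of_nonneg (G_nonneg t)]; exact hpt t ht)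
    have hμ : (volume (Ioc (0:ℝ) x \ S)).toReal ≤ x := by
      apply ENNReal.toReal_le_of_le_ofReal hx0.le
      exact le_trans (measure_mono diff_subset) (by rw [Real.volume_Ioc, sub_zero])
    have hc0 : 0 ≤ Real.cos w ^ (1/x) := Real.rpow_nonneg hcw.le _
    calc ∫ t in Ioc (0:ℝ) x \ S, G t ≤ ‖∫ t in Ioc (0:ℝ) x \ S, G t‖ := le_abs_self _
      _ ≤ Real.cos w ^ (1/x) * (volume (Ioc (0:ℝ) x \ S)).toReal := hn
      _ ≤ Real.cos w ^ (1/x) * x := mul_le_mul_of_nonneg_left hμ hc0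
  rw [hsplit]
  linarith

lemma F_abs (x : ℝ) : |∫ t in (0:ℝ)..x, G t| ≤ ∫ t in (0:ℝ)..|x|, G t := by
  rcases le_or_gt 0 x with h | h
  · rw [abs_of_nonneg h, abs_of_nonneg (intervalIntegral.integral_nonneg h fun t _ => G_nonneg t)]
  · have h1 : ∫ t in (0:ℝ)..x, G t = -∫ t in x..(0:ℝ), G t := by
      rw [intervalIntegral.integral_symm]
    have h2 : ∫ t in x..(0:ℝ), G t = ∫ t in (0:ℝ)..(-x), G t := by
      have := intervalIntegral.integral_comp_neg (a := (0:ℝ)) (b := -x) (f := G)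
      simp only [neg_neg, neg_zero] at this
      rw [← this]
      exact intervalIntegral.integral_congr fun t _ => G_even t
    rw [abs_of_neg h, h1, h2, abs_neg,
      abs_of_nonneg (intervalIntegral.integral_nonneg (by linarith) fun t _ => G_nonneg t)]

lemma G_cont (x : ℝ) (hx : x ≠ 0) : ContinuousAt G x := by
  have h1 : ContinuousAt (fun t : ℝ => |Real.cos (1/t)| ^ (1/|t|)) x := by
    have hb : ContinuousAt (fun t : ℝ => |Real.cos (1/t)|) x :=
      (Real.continuous_cos.continuousAt.comp
        ((continuousAt_const.div continuousAt_id hx))).abs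
    have he : ContinuousAt (fun t : ℝ => 1/|t|) x :=
      continuousAt_const.div continuous_abs.continuousAt (abs_ne_zero.mpr hx)
    exact hb.rpow he (Or.inr (by positivity))
  apply h1.congr
  filter_upwards [eventually_ne_nhds hx] with t ht
  unfold G
  rw [if_neg ht]

lemma F_deriv (x : ℝ) (hx : x ≠ 0) :
    HasDerivAt (fun y => ∫ t in (0:ℝ)..y, G t) (G x) x :=
  intervalIntegral.integral_hasDerivAt_right (G_intble 0 x)
    (G_meas.stronglyMeasurable.stronglyMeasurableAtFilter) (G_cont x hx)

lemma F_deriv0 : HasDerivAt (fun y => ∫ t in (0:ℝ)..y, G t) 0 0 := by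
  have hπ : (0:ℝ) < π := Real.pi_pos
  rw [hasDerivAt_iff_tendsto_slope]
  rw [Metric.tendsto_nhdsWithin_nhds]
  intro ε hε
  set w : ℝ := min (π/4) (π*ε/32) with hwdef
  have hw0 : 0 < w := lt_min (by positivity) (by positivity)
  have hw : w < π/2 := lt_of_le_of_lt (min_le_left _ _) (by linarith)
  have hw8 : 8*w/π ≤ ε/4 := by
    have : w ≤ π*ε/32 := min_le_right _ _
    rw [div_le_iff₀ hπ]
    nlinarith
  have hcw : 0 < Real.cos w := Real.cos_pos_of_mem_Ioo ⟨by linarith, hw⟩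
  have hcw1 : Real.cos w < 1 := by
    have h := Real.strictAntiOn_cos (Set.left_mem_Icc.mpr hπ.le) ⟨hw0.le, by linarith⟩ hw0
    rwa [Real.cos_zero] at h
  have hT : Tendsto (fun y : ℝ => Real.cos w ^ (1/y)) (𝓝[>] 0) (𝓝 0) := by
    have hlog : Real.log (Real.cos w) < 0 := Real.log_neg hcw hcw1
    have h1 : Tendsto (fun y : ℝ => 1/y) (𝓝[>] 0) atTop := by
      simpa [one_div] using tendsto_inv_nhdsGT_zero (𝕜 := ℝ)
    have h2 : Tendsto (fun y : ℝ => Real.log (Real.cos w) * (1/y)) (𝓝[>] 0) atBot :=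
      h1.const_mul_atTop_of_neg hlog
    have h3 : Tendsto (fun y : ℝ => Real.exp (Real.log (Real.cos w) * (1/y)))
        (𝓝[>] 0) (𝓝 0) := Real.tendsto_exp_atBot.comp h2
    apply h3.congr'
    filter_upwards [self_mem_nhdsWithin] with y _
    rw [Real.rpow_def_of_pos hcw]
  rw [Metric.tendsto_nhdsWithin_nhds] at hT
  obtain ⟨δ₁, hδ₁, H1⟩ := hT (ε/4) (by positivity)
  refine ⟨min δ₁ (min (1/(4*π)) (1/(4*w))), by positivity, ?_⟩
  intro x hx hxd
  have hx0 : x ≠ 0 := hx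
  set y := |x| with hy
  have hy0 : 0 < y := abs_pos.mpr hx0
  have hyd : y < min δ₁ (min (1/(4*π)) (1/(4*w))) := by
    rwa [Real.dist_eq, sub_zero] at hxd
  have hy1 : y < 1/(2*π) := by
    have : y < 1/(4*π) := lt_of_lt_of_le hyd (le_trans (min_le_right _ _) (min_le_left _ _))
    have h4 : 1/(4*π) < 1/(2*π) := by
      apply one_div_lt_one_div_of_lt (by positivity)
      linarith
    linarith
  have hy2 : y ≤ 1/(4*w) :=
    le_of_lt (lt_of_lt_of_le hyd (le_trans (min_le_right _ _) (min_le_right _ _)))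
  have hEst := est w y hw0 hw hy0 hy1 hy2
  have hCw : Real.cos w ^ (1/y) < ε/4 := by
    have hyδ1 : dist y 0 < δ₁ := by
      rw [Real.dist_eq, sub_zero, abs_of_pos hy0]
      exact lt_of_lt_of_le hyd (min_le_left _ _)
    have := H1 (mem_Ioi.mpr hy0) hyδ1
    rwa [Real.dist_eq, sub_zero,
      abs_of_nonneg (Real.rpow_nonneg hcw.le _)] at this
  rw [Real.dist_eq, sub_zero]
  have hslope : slope (fun y => ∫ t in (0:ℝ)..y, G t) 0 x
      = (∫ t in (0:ℝ)..x, G t) / x := by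
    rw [slope_def_field]
    simp [intervalIntegral.integral_same]
  rw [hslope, abs_div]
  rw [div_lt_iff₀ hy0]
  calc |∫ t in (0:ℝ)..x, G t| ≤ ∫ t in (0:ℝ)..y, G t := F_abs x
    _ ≤ (8*w/π)*y + Real.cos w ^ (1/y) * y := hEst
    _ < (ε/4)*y + (ε/4)*y := by
        apply add_lt_add_of_le_of_lt
        · exact mul_le_mul_of_nonneg_right hw8 hy0.le
        · exact mul_lt_mul_of_pos_right hCw hy0
    _ ≤ ε * y := by nlinarith

theorem stmt_16 (g f : ℝ → ℝ)
    (hg : ∀ t : ℝ, g t = if t = 0 then 0 else |Real.cos (1 / t)| ^ (1 / |t|))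
    (hf : ∀ x : ℝ, f x = ∫ t in (0 : ℝ)..x, g t) :
    HasDerivAt f 0 0 ∧ (∀ x : ℝ, 0 ≤ deriv f x) ∧ ¬ ContinuousAt (deriv f) 0 := by
  have hgG : g = G := funext fun t => by rw [hg t]; rfl
  subst hgG
  have hfF : f = fun y => ∫ t in (0:ℝ)..y, G t := funext fun x => hf x
  subst hfF
  refine ⟨F_deriv0, ?_, ?_⟩
  · intro x
    rcases eq_or_ne x 0 with rfl | hx
    · rw [F_deriv0.deriv]
    · rw [(F_deriv x hx).deriv]; exact G_nonneg x
  · intro hcont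
    have hseq : Tendsto (fun n : ℕ => (2*π*((n:ℝ)+1))⁻¹) atTop (𝓝 0) := by
      apply Tendsto.inv_tendsto_atTop
      apply Tendsto.const_mul_atTop (by positivity)
      exact tendsto_atTop_add_const_right _ _ tendsto_natCast_atTop_atTop
    have h1 : Tendsto (fun n : ℕ => deriv (fun y => ∫ t in (0:ℝ)..y, G t)
        ((2*π*((n:ℝ)+1))⁻¹)) atTop
        (𝓝 (deriv (fun y => ∫ t in (0:ℝ)..y, G t) 0)) := hcont.tendsto.comp hseq
    rw [F_deriv0.deriv] at h1
    have h2 : ∀ n : ℕ, deriv (fun y => ∫ t in (0:ℝ)..y, G t) ((2*π*((n:ℝ)+1))⁻¹) = 1 := by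
      intro n
      have hpos : (0:ℝ) < (2*π*((n:ℝ)+1))⁻¹ := by positivity
      rw [(F_deriv _ (ne_of_gt hpos)).deriv]
      unfold G
      rw [if_neg (ne_of_gt hpos), abs_of_pos hpos]; simp only [one_div, inv_inv]
      have hc : Real.cos (2*π*((n:ℝ)+1)) = 1 := by
        have h := Real.cos_nat_mul_two_pi (n+1)
        push_cast at h
        rw [show 2*π*((n:ℝ)+1) = ((n:ℝ)+1)*(2*π) by ring]; exact h
      rw [hc, abs_one, Real.one_rpow]
    rw [tendsto_congr h2] at h1
    have := tendsto_nhds_unique h1 tendsto_const_nhds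
    norm_num at this
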